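/- Let n be a natural number and let ρ be a 2^n × 2^n complex matrix that is Hermitian and positive semidefinite. Let the 4^n n-qubit Pauli strings be enumerated as E_a, and define the 4^n × 4^n matrix Γ(ρ) by Γ_{ab}(ρ) = tr(E_aᴴ·ρ) · tr(E_b·ρ) · tr(E_a·E_bᴴ·ρ). Then Γ(ρ) is Hermitian and positive semidefinite. -/

import Mathlib

open Matrix BigOperators
open scoped ComplexOrder

/-- The four single-qubit Pauli matrices: `0 ↦ I`, `1 ↦ X`, `2 ↦ Y`, `3 ↦ Z`. -/
noncomputable def pauliMat : Fin 4 → Matrix (Fin 2) (Fin 2) ℂ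
  | 0 => 1
  | 1 => !![0, 1; 1, 0]
  | 2 => !![0, -Complex.I; Complex.I, 0]
  | 3 => !![1, 0; 0, -1]

/-- The `n`-qubit Pauli string given by `s : Fin n → Fin 4`, i.e. the `n`-fold
Kronecker (tensor) product of the corresponding single-qubit Pauli matrices,
written entrywise in the computational basis `Fin n → Fin 2`. -/
noncomputable def pauliString {n : ℕ} (s : Fin n → Fin 4) :
    Matrix (Fin n → Fin 2) (Fin n → Fin 2) ℂ :=
  Matrix.of fun x y => ∏ i, pauliMat (s i) (x i) (y i)

/-- The weight of a Pauli string: the number of tensor factors that are not `I`. -/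
def pauliWeight {n : ℕ} (s : Fin n → Fin 4) : ℕ :=
  (Finset.univ.filter fun i => s i ≠ 0).card

/-- `P` is (the projector of) a quantum code with parameters `((n, K, δ))₂`:
`P` is a `2^n × 2^n` Hermitian idempotent matrix of rank `K` such that for every
`n`-qubit Pauli string `E` of weight at most `δ - 1` there is a scalar `c` with
`P * E * P = c • P` (the Knill–Laflamme conditions). -/
def IsQuantumCode (n K δ : ℕ) (P : Matrix (Fin n → Fin 2) (Fin n → Fin 2) ℂ) : Prop :=
  P.IsHermitian ∧ P * P = P ∧ P.rank = K ∧
    ∀ s : Fin n → Fin 4, pauliWeight s ≤ δ - 1 →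
      ∃ c : ℂ, P * pauliString s * P = c • P

/-- Purity of a code of distance `δ`: `tr (P * E) = 0` for every Pauli string `E`
with `0 < wt E < δ`. -/
def IsPureCode (n δ : ℕ) (P : Matrix (Fin n → Fin 2) (Fin n → Fin 2) ℂ) : Prop :=
  ∀ s : Fin n → Fin 4, 0 < pauliWeight s → pauliWeight s < δ →
    Matrix.trace (P * pauliString s) = 0

lemma pauliMat_star (k : Fin 4) (a b : Fin 2) :
    star (pauliMat k a b) = pauliMat k b a := by
  fin_cases k <;> fin_cases a <;> fin_cases b <;>
    simp [pauliMat, Matrix.one_apply]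

lemma pauliString_herm {n : ℕ} (s : Fin n → Fin 4) :
    (pauliString s)ᴴ = pauliString s := by
  ext x y
  simp only [conjTranspose_apply, pauliString, of_apply]
  rw [star_prod]
  exact Finset.prod_congr rfl fun i _ => pauliMat_star _ _ _

lemma trace_conjTranspose_mul_self_nonneg {m : Type*} [Fintype m]
    (G : Matrix m m ℂ) : 0 ≤ Matrix.trace (Gᴴ * G) := by
  rw [Matrix.trace]
  apply Finset.sum_nonneg
  intro j _
  simp only [Matrix.diag_apply, Matrix.mul_apply, conjTranspose_apply]
  exact Finset.sum_nonneg fun i _ => star_mul_self_nonneg _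

open scoped MatrixOrder in
noncomputable def Matrix.PosSemidef.sqrt {m : Type*} [Fintype m] [DecidableEq m]
    {ρ : Matrix m m ℂ} (_ : ρ.PosSemidef) : Matrix m m ℂ := CFC.sqrt ρ

open scoped MatrixOrder in
lemma Matrix.PosSemidef.sqrt_mul_self {m : Type*} [Fintype m] [DecidableEq m]
    {ρ : Matrix m m ℂ} (hpsd : ρ.PosSemidef) : hpsd.sqrt * hpsd.sqrt = ρ :=
  CFC.sqrt_mul_sqrt_self ρ hpsd.nonneg

open scoped MatrixOrder in
lemma Matrix.PosSemidef.posSemidef_sqrt {m : Type*} [Fintype m] [DecidableEq m]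
    {ρ : Matrix m m ℂ} (hpsd : ρ.PosSemidef) : hpsd.sqrt.PosSemidef :=
  (CFC.sqrt_nonneg ρ).posSemidef

lemma trace_conj_mul_psd_nonneg {m : Type*} [Fintype m] [DecidableEq m]
    {ρ : Matrix m m ℂ} (hpsd : ρ.PosSemidef) (F : Matrix m m ℂ) :
    0 ≤ Matrix.trace (Fᴴ * F * ρ) := by
  have hs := hpsd.sqrt_mul_self
  have hH : hpsd.sqrtᴴ = hpsd.sqrt := hpsd.posSemidef_sqrt.1
  calc (0:ℂ) ≤ Matrix.trace ((F * hpsd.sqrt)ᴴ * (F * hpsd.sqrt)) :=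
        trace_conjTranspose_mul_self_nonneg _
    _ = Matrix.trace (Fᴴ * F * ρ) := by
        rw [conjTranspose_mul, hH, Matrix.trace_mul_comm,
          show F * hpsd.sqrt * (hpsd.sqrt * Fᴴ) = F * (hpsd.sqrt * hpsd.sqrt) * Fᴴ by
            simp only [Matrix.mul_assoc],
          hs, Matrix.trace_mul_comm, ← Matrix.mul_assoc]

/-- For a Hermitian positive semidefinite $2^n × 2^n$ matrix $ρ$, the $4^n × 4^n$
moment matrix $Γ(ρ)$ with entries
$Γ_{ab}(ρ) = tr(E_a^† ρ) tr(E_b ρ) tr(E_a E_b^† ρ)$, indexed by the $n$-qubit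
Pauli strings, is Hermitian and positive semidefinite. -/
theorem stmt_19 (n : ℕ) (ρ : Matrix (Fin n → Fin 2) (Fin n → Fin 2) ℂ)
    (hherm : ρ.IsHermitian) (hpsd : ρ.PosSemidef) :
    (Matrix.of fun a b : Fin n → Fin 4 =>
        Matrix.trace ((pauliString a)ᴴ * ρ) * Matrix.trace (pauliString b * ρ) *
          Matrix.trace (pauliString a * (pauliString b)ᴴ * ρ)).IsHermitian ∧
    (Matrix.of fun a b : Fin n → Fin 4 =>
        Matrix.trace ((pauliString a)ᴴ * ρ) * Matrix.trace (pauliString b * ρ) *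
          Matrix.trace (pauliString a * (pauliString b)ᴴ * ρ)).PosSemidef := by
  have hreal : ∀ a : Fin n → Fin 4,
      star (Matrix.trace (pauliString a * ρ)) = Matrix.trace (pauliString a * ρ) := by
    intro a
    rw [← Matrix.trace_conjTranspose, conjTranspose_mul, pauliString_herm, hherm.eq,
      Matrix.trace_mul_comm]
  have hswap : ∀ a b : Fin n → Fin 4,
      star (Matrix.trace (pauliString b * pauliString a * ρ)) =
        Matrix.trace (pauliString a * pauliString b * ρ) := by
    intro a b
    rw [← Matrix.trace_conjTranspose, conjTranspose_mul, conjTranspose_mul,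
      pauliString_herm, pauliString_herm, hherm.eq, Matrix.trace_mul_comm,
      Matrix.mul_assoc]
  have hHerm : (Matrix.of fun a b : Fin n → Fin 4 =>
        Matrix.trace ((pauliString a)ᴴ * ρ) * Matrix.trace (pauliString b * ρ) *
          Matrix.trace (pauliString a * (pauliString b)ᴴ * ρ)).IsHermitian := by
    ext a b
    simp only [conjTranspose_apply, of_apply, pauliString_herm, star_mul']
    rw [hreal, hreal, hswap]
    ring
  refine ⟨hHerm, posSemidef_iff_dotProduct_mulVec.mpr ⟨hHerm, fun x => ?_⟩⟩
  set c : (Fin n → Fin 4) → ℂ := fun a => x a * Matrix.trace (pauliString a * ρ) with hc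
  set F : Matrix (Fin n → Fin 2) (Fin n → Fin 2) ℂ := ∑ a, c a • pauliString a with hFdef
  have hF : Matrix.trace (Fᴴ * F * ρ) =
      ∑ a, ∑ b, star (c a) * c b * Matrix.trace (pauliString a * pauliString b * ρ) := by
    simp only [hFdef, conjTranspose_sum, conjTranspose_smul, pauliString_herm,
      Finset.sum_mul, Finset.mul_sum, smul_mul_assoc, mul_smul_comm, smul_smul,
      Matrix.trace_sum, Matrix.trace_smul, smul_eq_mul, Matrix.mul_assoc]
    rw [Finset.sum_comm]
    exact Finset.sum_congr rfl fun a _ => Finset.sum_congr rfl fun b _ => by ring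
  have key : dotProduct (star x) ((Matrix.of fun a b : Fin n → Fin 4 =>
        Matrix.trace ((pauliString a)ᴴ * ρ) * Matrix.trace (pauliString b * ρ) *
          Matrix.trace (pauliString a * (pauliString b)ᴴ * ρ)) *ᵥ x) =
      Matrix.trace (Fᴴ * F * ρ) := by
    rw [hF]
    simp only [dotProduct, mulVec, Pi.star_apply, of_apply, pauliString_herm,
      Finset.mul_sum]
    refine Finset.sum_congr rfl fun a _ => Finset.sum_congr rfl fun b _ => ?_
    simp only [hc, star_mul']
    rw [hreal]
    ring
  rw [key]
  exact trace_conj_mul_psd_nonneg hpsd F
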